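/- Let x ∈ (0,1) be real (regarded as a point of the unit disk B² ⊂ ℂ), let y ∈ B² with y ≠ 0, Im y ≥ 0 and |y| = x, and let ω = ∠(x, 0, y) be the angle at the origin between x and y. Define θ = ω/2 if sin((π−ω)/2) ≥ x, and θ = (ω−π)/2 + arcsin( sin((π−ω)/2) / x ) if sin((π−ω)/2) < x. Then the supremum defining s_{B²}(x,y) is attained at z = e^{iθ}; that is, s_{B²}(x,y) = |x−y| / (|x − e^{iθ}| + |y − e^{iθ}|). -/

import Mathlib

open Metric Set Real

/-- The triangular ratio metric of `G`. -/
noncomputable def sMet {E : Type*} [MetricSpace E] (G : Set E) (x y : E) : ℝ :=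
  sSup ((fun z => dist x y / (dist x z + dist z y)) '' frontier G)

/-- The Cassinian metric of `G`. -/
noncomputable def cMet {E : Type*} [MetricSpace E] (G : Set E) (x y : E) : ℝ :=
  sSup ((fun z => dist x y / (dist x z * dist z y)) '' frontier G)

/-- The distance ratio metric of `G`. -/
noncomputable def jMet {E : Type*} [MetricSpace E] (G : Set E) (x y : E) : ℝ :=
  Real.log (1 + dist x y / min (infDist x (frontier G)) (infDist y (frontier G)))
lemma norm_eq_of_normSq (A B : ℂ) (h : Complex.normSq A = Complex.normSq B) : ‖A‖ = ‖B‖ := by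
  rw [Complex.norm_def, Complex.norm_def, h]

/-- supporting-line inequality used in case 1 -/
lemma support_ineq (p q z₀ z : ℂ) (hz₀ : ‖z₀‖ = 1) (hz : ‖z‖ = 1)
    (a : ℝ) (ha : 0 < a) (hpa : ‖p - z₀‖ = a) (hqa : ‖q - z₀‖ = a)
    (μ : ℝ) (hμ : 0 ≤ μ) (hsum : p + q - 2 * z₀ = (μ : ℂ) * z₀) :
    a + a ≤ ‖z - p‖ + ‖z - q‖ := by
  set u := p - z₀ with hu
  set w := q - z₀ with hw
  have key : ∀ v' : ℂ, ‖v' - z₀‖ = a → ((v' - z) * (starRingEnd ℂ) (v' - z₀)).re ≤ ‖z - v'‖ * a := by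
    intro v' hv
    calc ((v' - z) * (starRingEnd ℂ) (v' - z₀)).re ≤ ‖(v' - z) * (starRingEnd ℂ) (v' - z₀)‖ :=
          Complex.re_le_norm _
      _ = ‖v' - z‖ * ‖v' - z₀‖ := by rw [norm_mul, RCLike.norm_conj]
      _ = ‖z - v'‖ * a := by rw [norm_sub_rev, hv]
  have h1 := key p hpa
  have h2 := key q hqa
  have huw : u + w = (μ : ℂ) * z₀ := by rw [hu, hw]; linear_combination hsum
  have h3 : ((p - z) * (starRingEnd ℂ) u).re + ((q - z) * (starRingEnd ℂ) w).re
      = a^2 + a^2 + μ * (1 - (z * (starRingEnd ℂ) z₀).re) := by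
    have e : (p - z) * (starRingEnd ℂ) u + (q - z) * (starRingEnd ℂ) w
        = u * (starRingEnd ℂ) u + w * (starRingEnd ℂ) w
          + (μ:ℂ) * ((z₀ - z) * (starRingEnd ℂ) z₀) := by
      have e0 : (p - z) * (starRingEnd ℂ) u + (q - z) * (starRingEnd ℂ) w
          = u * (starRingEnd ℂ) u + w * (starRingEnd ℂ) w
            + (z₀ - z) * ((starRingEnd ℂ) u + (starRingEnd ℂ) w) := by
        rw [hu, hw]; ring
      rw [e0, ← map_add, huw, map_mul, Complex.conj_ofReal]; ring
    have ere := congrArg Complex.re e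
    simp only [Complex.add_re] at ere
    rw [ere]
    have n1 : (u * (starRingEnd ℂ) u).re = a^2 := by
      rw [Complex.mul_conj]
      simp [Complex.normSq_eq_norm_sq, hu, hpa, ← Complex.ofReal_pow]; exact congrArg (· ^ 2) hpa
    have n2 : (w * (starRingEnd ℂ) w).re = a^2 := by
      rw [Complex.mul_conj]
      simp [Complex.normSq_eq_norm_sq, hw, hqa, ← Complex.ofReal_pow]; exact congrArg (· ^ 2) hqa
    have n3 : ((μ:ℂ) * ((z₀ - z) * (starRingEnd ℂ) z₀)).re
        = μ * (1 - (z * (starRingEnd ℂ) z₀).re) := by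
      rw [Complex.re_ofReal_mul, sub_mul, Complex.sub_re, Complex.mul_conj]
      simp [Complex.normSq_eq_norm_sq, hz₀]
    rw [n1, n2, n3]
  have h4 : (z * (starRingEnd ℂ) z₀).re ≤ 1 := by
    calc (z * (starRingEnd ℂ) z₀).re ≤ ‖z * (starRingEnd ℂ) z₀‖ := Complex.re_le_norm _
      _ = 1 := by rw [norm_mul, RCLike.norm_conj, hz, hz₀, one_mul]
  nlinarith [h1, h2, h3, h4, norm_nonneg (z - p), norm_nonneg (z - q)]

set_option maxHeartbeats 2000000 in
/-- for `x ∈ (0,1) ⊂ ℝ` viewed in the unit disk, `y ∈ B²` with `y ≠ 0`,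
`Im y ≥ 0`, `|y| = x`, and `ω = ∠(x,0,y)`, the supremum defining `s_{B²}(x,y)` is
attained at `z = e^{iθ}` with `θ` as specified. -/
theorem sMet_extremal_point (x : ℝ) (hx : x ∈ Set.Ioo (0 : ℝ) 1) (y : ℂ)
    (hy : y ∈ Metric.ball (0 : ℂ) 1) (hy0 : y ≠ 0) (hyim : 0 ≤ y.im) (hyx : ‖y‖ = x)
    (ω : ℝ) (hω : ω = EuclideanGeometry.angle (x : ℂ) 0 y)
    (θ : ℝ)
    (hθ : θ = if x ≤ Real.sin ((Real.pi - ω) / 2) then ω / 2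
      else (ω - Real.pi) / 2 + Real.arcsin (Real.sin ((Real.pi - ω) / 2) / x)) :
    sMet (Metric.ball (0 : ℂ) 1) (x : ℂ) y =
      ‖(x : ℂ) - y‖ /
        (‖(x : ℂ) - Complex.exp (θ * Complex.I)‖ + ‖y - Complex.exp (θ * Complex.I)‖) := by
  obtain ⟨hx0, hx1⟩ := hx
  have hxne : x ≠ 0 := hx0.ne'
  set z₀ : ℂ := Complex.exp (↑θ * Complex.I) with hz₀def
  have hz₀ : ‖z₀‖ = 1 := by
    rw [hz₀def]; exact Complex.norm_exp_ofReal_mul_I θ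
  have hz₀re : z₀.re = Real.cos θ := by rw [hz₀def]; exact Complex.exp_ofReal_mul_I_re θ
  have hz₀im : z₀.im = Real.sin θ := by rw [hz₀def]; exact Complex.exp_ofReal_mul_I_im θ
  have hy2 : y.re * y.re + y.im * y.im = x ^ 2 := by
    have h : Complex.normSq y = x ^ 2 := by rw [← Complex.sq_norm, hyx]
    rwa [Complex.normSq_apply] at h
  -- angle facts
  have hωnn : 0 ≤ ω := hω ▸ EuclideanGeometry.angle_nonneg _ _ _
  have hωpi : ω ≤ π := hω ▸ EuclideanGeometry.angle_le_pi _ _ _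
  have hxnorm : ‖(x:ℂ)‖ = x := by
    rw [Complex.norm_real, Real.norm_eq_abs, abs_of_pos hx0]
  have hcosω : Real.cos ω = y.re / x := by
    rw [hω]
    have h1 : EuclideanGeometry.angle (x:ℂ) 0 y = InnerProductGeometry.angle (x:ℂ) y := by
      unfold EuclideanGeometry.angle; simp [vsub_eq_sub]
    rw [h1, InnerProductGeometry.cos_angle]
    have hinner : (inner ℝ ((x:ℂ)) y : ℝ) = x * y.re := by
      have h2 : (inner ℝ ((x:ℂ)) y : ℝ) = ((starRingEnd ℂ) (x:ℂ) * y).re := by rw [Complex.inner, mul_comm]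
      rw [h2, Complex.conj_ofReal, Complex.re_ofReal_mul]
    rw [hinner, hyx, hxnorm]
    field_simp
  have hsinω : Real.sin ω = y.im / x := by
    rw [Real.sin_eq_sqrt_one_sub_cos_sq hωnn hωpi, hcosω]
    rw [show 1 - (y.re/x)^2 = (y.im/x)^2 by field_simp; linear_combination -hy2]
    rw [Real.sqrt_sq (by positivity)]
  have hyre : y.re = x * Real.cos ω := by rw [hcosω]; field_simp
  have hyimω : y.im = x * Real.sin ω := by rw [hsinω]; field_simp
  set c := Real.cos (ω/2) with hc
  set s := Real.sin (ω/2) with hs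
  have hcs : c^2 + s^2 = 1 := by
    rw [hc, hs]; linear_combination Real.sin_sq_add_cos_sq (ω/2)
  have hcosω2 : Real.cos ω = 2*c^2 - 1 := by
    rw [show ω = 2*(ω/2) by ring, Real.cos_two_mul, ← hc]
  have hsinω2 : Real.sin ω = 2*s*c := by
    rw [show ω = 2*(ω/2) by ring, Real.sin_two_mul, ← hc, ← hs]
  have hs0 : 0 ≤ s := Real.sin_nonneg_of_nonneg_of_le_pi (by linarith) (by linarith [Real.pi_pos])
  have hc0 : 0 ≤ c := Real.cos_nonneg_of_mem_Icc ⟨by linarith [Real.pi_pos], by linarith⟩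
  have hcond : Real.sin ((π - ω)/2) = c := by
    rw [show (π - ω)/2 = π/2 - ω/2 by ring, Real.sin_pi_div_two_sub, hc]
  rw [hcond] at hθ
  set p : ℂ := ((x⁻¹ : ℝ) : ℂ) with hp
  set q : ℂ := y * (((x^2)⁻¹ : ℝ) : ℂ) with hq
  -- conversion lemma
  have hzsq : ∀ z : ℂ, ‖z‖ = 1 → z.re * z.re + z.im * z.im = 1 := by
    intro z hz1
    have h : Complex.normSq z = 1 := by rw [← Complex.sq_norm, hz1]; norm_num
    rwa [Complex.normSq_apply] at h
  have hconv : ∀ z : ℂ, ‖z‖ = 1 → ‖(x:ℂ) - z‖ + ‖z - y‖ = x * (‖z - p‖ + ‖z - q‖) := by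
    intro z hz1
    have hz2 := hzsq z hz1
    have e1 : ‖(x:ℂ) - z‖ = x * ‖z - p‖ := by
      rw [show x * ‖z - p‖ = ‖(x:ℂ) * (z - p)‖ by
        rw [norm_mul, Complex.norm_real, Real.norm_eq_abs, abs_of_pos hx0]]
      apply norm_eq_of_normSq
      simp only [hp, Complex.normSq_apply, Complex.sub_re, Complex.sub_im, Complex.mul_re,
        Complex.mul_im, Complex.ofReal_re, Complex.ofReal_im]
      field_simp
      linear_combination (x^2 - x^4) * hz2
    have e2 : ‖z - y‖ = x * ‖z - q‖ := by
      rw [show x * ‖z - q‖ = ‖(x:ℂ) * (z - q)‖ by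
        rw [norm_mul, Complex.norm_real, Real.norm_eq_abs, abs_of_pos hx0]]
      apply norm_eq_of_normSq
      simp only [hq, Complex.normSq_apply, Complex.sub_re, Complex.sub_im, Complex.mul_re,
        Complex.mul_im, Complex.ofReal_re, Complex.ofReal_im]
      field_simp
      linear_combination (x^4 - x^6) * hz2 + (x^4 - x^2) * hy2
    rw [e1, e2]; ring
  -- the core minimization
  have hmin : ∀ z : ℂ, ‖z‖ = 1 → ‖z₀ - p‖ + ‖z₀ - q‖ ≤ ‖z - p‖ + ‖z - q‖ := by
    intro z hz1
    by_cases hcase : x ≤ c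
    · -- case 1 : θ = ω/2
      rw [if_pos hcase] at hθ
      have hz₀re' : z₀.re = c := by rw [hz₀re, hθ, hc]
      have hz₀im' : z₀.im = s := by rw [hz₀im, hθ, hs]
      have ha : 0 < ‖p - z₀‖ := by
        have h1 : 1 < x⁻¹ := by
          rw [lt_inv_comm₀] <;> simp [hx0, hx1]
        have h2 : ‖p‖ = x⁻¹ := by
          rw [hp, Complex.norm_real, Real.norm_eq_abs, abs_of_pos (by positivity)]
        have h3 : ‖p‖ - ‖z₀‖ ≤ ‖p - z₀‖ := norm_sub_norm_le _ _
        rw [h2, hz₀] at h3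
        linarith
      have hqa : ‖q - z₀‖ = ‖p - z₀‖ := by
        apply norm_eq_of_normSq
        simp only [hp, hq, Complex.normSq_apply, Complex.sub_re, Complex.sub_im, Complex.mul_re,
          Complex.mul_im, Complex.ofReal_re, Complex.ofReal_im, hz₀re', hz₀im', hyre, hyimω,
          hcosω2, hsinω2]
        field_simp
        linear_combination (-4*c*x + 4*c^2) * hcs
      have hsum : p + q - 2 * z₀ = ((2*(c/x - 1) : ℝ) : ℂ) * z₀ := by
        apply Complex.ext
        · simp only [hp, hq, Complex.add_re, Complex.sub_re, Complex.mul_re, Complex.mul_im,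
            Complex.ofReal_re, Complex.ofReal_im, Complex.re_ofReal_mul, hz₀re', hz₀im',
            hyre, hyimω, hcosω2, hsinω2, Complex.re_ofNat, Complex.im_ofNat]
          field_simp
          ring
        · simp only [hp, hq, Complex.add_im, Complex.sub_im, Complex.mul_re, Complex.mul_im,
            Complex.ofReal_re, Complex.ofReal_im, hz₀re', hz₀im', hyre, hyimω, hcosω2, hsinω2, Complex.re_ofNat, Complex.im_ofNat]
          field_simp
          ring
      have hμ : 0 ≤ 2*(c/x - 1) := by
        have : 1 ≤ c / x := (one_le_div hx0).mpr hcase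
        linarith
      have := support_ineq p q z₀ z hz₀ hz1 ‖p - z₀‖ ha rfl hqa _ hμ hsum
      calc ‖z₀ - p‖ + ‖z₀ - q‖ = ‖p - z₀‖ + ‖p - z₀‖ := by
            rw [norm_sub_rev z₀ p, norm_sub_rev z₀ q, hqa]
        _ ≤ ‖z - p‖ + ‖z - q‖ := this
    · -- case 2
      rw [if_neg hcase] at hθ
      push_neg at hcase
      have hc1 : c < 1 := hcase.trans hx1
      have hω0 : 0 < ω := by
        rcases hωnn.lt_or_eq with h | h
        · exact h
        · exfalso; rw [hc, ← h] at hc1; simp at hc1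
      have hspos : 0 < s := by
        rw [hs]
        apply Real.sin_pos_of_pos_of_lt_pi (by linarith)
        linarith [Real.pi_pos]
      set r := Real.sqrt (x^2 - c^2) with hr
      have hr0 : 0 ≤ r := Real.sqrt_nonneg _
      have hr2 : r^2 = x^2 - c^2 :=
        Real.sq_sqrt (sub_nonneg.mpr (pow_le_pow_left₀ hc0 hcase.le 2))
      have hrs : r ≤ s := by
        rw [hr, show s = Real.sqrt (s^2) by rw [Real.sqrt_sq hs0]]
        apply Real.sqrt_le_sqrt
        have hx2 : x^2 ≤ 1 := by nlinarith [hx0, hx1]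
        linarith [hcs]
      set t : ℝ := (1 + r/s)/2 with ht
      have ht0 : 0 ≤ t := by positivity
      have ht1 : t ≤ 1 := by
        rw [ht]
        have : r / s ≤ 1 := (div_le_one hspos).mpr hrs
        linarith
      have hcx1 : c / x ≤ 1 := (div_le_one hx0).mpr hcase.le
      have hβs : Real.sin (Real.arcsin (c/x)) = c/x :=
        Real.sin_arcsin (by linarith [div_nonneg hc0 hx0.le]) hcx1
      have hβc : Real.cos (Real.arcsin (c/x)) = r / x := by
        rw [Real.cos_arcsin, show 1 - (c/x)^2 = (x^2 - c^2)/x^2 by field_simp,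
          Real.sqrt_div (by nlinarith), Real.sqrt_sq hx0.le, ← hr]
      have hcosθ : Real.cos θ = s*(r/x) + c*(c/x) := by
        rw [hθ, Real.cos_add, show (ω - π)/2 = -(π/2 - ω/2) by ring, Real.cos_neg,
          Real.sin_neg, Real.cos_pi_div_two_sub, Real.sin_pi_div_two_sub, hβs, hβc, ← hc, ← hs]
        ring
      have hsinθ : Real.sin θ = s*(c/x) - c*(r/x) := by
        rw [hθ, Real.sin_add, show (ω - π)/2 = -(π/2 - ω/2) by ring, Real.cos_neg,
          Real.sin_neg, Real.cos_pi_div_two_sub, Real.sin_pi_div_two_sub, hβs, hβc, ← hc, ← hs]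
        ring
      have hcomb : z₀ = (t:ℂ) * p + ((1 - t : ℝ):ℂ) * q := by
        apply Complex.ext
        · simp only [hp, hq, Complex.add_re, Complex.re_ofReal_mul, Complex.mul_re,
            Complex.mul_im, Complex.ofReal_re, Complex.ofReal_im, hz₀re, hcosθ, ht,
            hyre, hcosω2]
          field_simp
          linear_combination (2*x*r) * hcs
        · simp only [hp, hq, Complex.add_im, Complex.re_ofReal_mul, Complex.mul_re,
            Complex.mul_im, Complex.ofReal_re, Complex.ofReal_im, hz₀im, hsinθ, ht,
            hyimω, hsinω2]
          field_simp
          ring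
      have e1 : z₀ - p = ((1 - t : ℝ):ℂ) * (q - p) := by
        rw [hcomb]; push_cast; ring
      have e2 : z₀ - q = ((t : ℝ):ℂ) * (p - q) := by
        rw [hcomb]; push_cast; ring
      calc ‖z₀ - p‖ + ‖z₀ - q‖ = (1 - t) * ‖q - p‖ + t * ‖p - q‖ := by
            rw [e1, e2, norm_mul, norm_mul, Complex.norm_real, Complex.norm_real,
              Real.norm_eq_abs, Real.norm_eq_abs, abs_of_nonneg (by linarith), abs_of_nonneg ht0]
        _ = ‖p - q‖ := by rw [norm_sub_rev q p]; ring
        _ = ‖(p - z) + (z - q)‖ := by ring_nf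
        _ ≤ ‖p - z‖ + ‖z - q‖ := norm_add_le _ _
        _ = ‖z - p‖ + ‖z - q‖ := by rw [norm_sub_rev p z]
  -- assemble
  have hfr : frontier (Metric.ball (0:ℂ) 1) = Metric.sphere 0 1 :=
    frontier_ball 0 one_ne_zero
  unfold sMet
  rw [hfr]
  have hdenpos : 0 < dist (↑x : ℂ) z₀ + dist z₀ y := by
    have h1 : 1 - x ≤ dist (↑x : ℂ) z₀ := by
      rw [dist_eq_norm]
      have h3 : ‖z₀‖ - ‖(x:ℂ)‖ ≤ ‖z₀ - (x:ℂ)‖ := norm_sub_norm_le _ _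
      rw [hz₀, hxnorm, norm_sub_rev] at h3
      exact h3
    have := dist_nonneg (x := z₀) (y := y)
    linarith
  have hkey : ∀ z : ℂ, ‖z‖ = 1 →
      dist (↑x : ℂ) z₀ + dist z₀ y ≤ dist (↑x : ℂ) z + dist z y := by
    intro z hz1
    have h1 := hconv z₀ hz₀
    have h2 := hconv z hz1
    simp only [dist_eq_norm]
    rw [h1, h2]
    exact mul_le_mul_of_nonneg_left (hmin z hz1) hx0.le
  have hgreat : IsGreatest ((fun z => dist (↑x : ℂ) y / (dist (↑x : ℂ) z + dist z y)) ''
      Metric.sphere 0 1) (dist (↑x : ℂ) y / (dist (↑x : ℂ) z₀ + dist z₀ y)) := by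
    constructor
    · exact ⟨z₀, by simpa [mem_sphere_iff_norm] using hz₀, rfl⟩
    · rintro v ⟨z, hzs, rfl⟩
      have hz1 : ‖z‖ = 1 := by simpa [mem_sphere_iff_norm] using hzs
      have h1 := hkey z hz1
      rw [div_le_div_iff₀ (lt_of_lt_of_le hdenpos h1) hdenpos]
      exact mul_le_mul_of_nonneg_left h1 dist_nonneg
  rw [hgreat.csSup_eq]
  rw [dist_eq_norm, dist_eq_norm, dist_eq_norm, norm_sub_rev z₀ y]
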